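/- Let d ≥ 1, E ⊆ ℝ^d be a non-degenerate parallelepiped with lattice Λ_E, f be a tempered distribution on ℝ^d, and let φ₀, ψ be Schwartz functions on ℝ^d. Then sup_{x∈ℝ^d} Σ_{k∈Λ_E} |f( y ↦ φ₀(y − x + k) ψ(y) )| < ∞. -/

import Mathlib

open MeasureTheory Filter
open scoped BigOperators InnerProductSpace Topology

noncomputable section

abbrev Euc (d : ℕ) := EuclideanSpace ℝ (Fin d)

/-- The lattice point `∑ i, j i • e i` associated with `j : ℤ^d`. -/
def latPt {d : ℕ} (e : Fin d → Euc d) (j : Fin d → ℤ) : Euc d :=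
  ∑ i, (j i : ℝ) • e i

/-- The (closed) parallelepiped spanned by `e`. -/
def paraSet {d : ℕ} (e : Fin d → Euc d) : Set (Euc d) :=
  (fun t : Fin d → ℝ => ∑ i, t i • e i) '' (Set.univ.pi fun _ => Set.Icc (0:ℝ) 1)

/-- Fourier coefficient `c(f, ξ) = |E|⁻¹ ∫_E f(x) e^{-i⟨x,ξ⟩} dx`. -/
def fourCoeff {d : ℕ} (e : Fin d → Euc d) (f : Euc d → ℂ) (ξ : Euc d) : ℂ :=
  (((volume (paraSet e)).toReal : ℂ))⁻¹ *
    ∫ x in paraSet e, f x * Complex.exp (-(Complex.I) * (⟪x, ξ⟫_ℝ : ℂ))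

/-- Iterated partial derivatives along a list of coordinate directions. -/
def pdSeq {d : ℕ} : List (Fin d) → (Euc d → ℂ) → (Euc d → ℂ)
  | [], f => f
  | (i :: L), f => pdSeq L (fun x => fderiv ℝ f x (EuclideanSpace.single i 1))

/-- The canonical list of directions attached to a multi-index `β`. -/
def mIdxL {d : ℕ} (β : Fin d → ℕ) : List (Fin d) :=
  (List.finRange d).flatMap fun i => List.replicate (β i) i

/-- The multi-index partial derivative `∂^β f`. -/
def pD {d : ℕ} (β : Fin d → ℕ) (f : Euc d → ℂ) : Euc d → ℂ := pdSeq (mIdxL β) f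

/-- Fourier transform, normalized as `(2π)^{-d/2} ∫ f(x) e^{-i⟨x,ξ⟩} dx`. -/
def FT {d : ℕ} (f : Euc d → ℂ) (ξ : Euc d) : ℂ :=
  (((2 * Real.pi) ^ (-(d:ℝ)/2) : ℝ) : ℂ) *
    ∫ x, f x * Complex.exp (-(Complex.I) * (⟪x, ξ⟫_ℝ : ℂ))

/-- Short-time Fourier transform with window `φ`. -/
def STFT {d : ℕ} (φ f : Euc d → ℂ) (x ξ : Euc d) : ℂ :=
  (((2 * Real.pi) ^ (-(d:ℝ)/2) : ℝ) : ℂ) *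
    ∫ y, f y * (starRingEnd ℂ) (φ (y - x)) * Complex.exp (-(Complex.I) * (⟪y, ξ⟫_ℝ : ℂ))


private lemma fderiv_translate' {E F : Type*} [NormedAddCommGroup E] [NormedSpace ℝ E]
    [NormedAddCommGroup F] [NormedSpace ℝ F] {f : E → F} (hf : Differentiable ℝ f)
    (c : E) (y : E) : fderiv ℝ (fun z => f (z + c)) y = fderiv ℝ f (y + c) := by
  have h1 : HasFDerivAt (fun z : E => z + c) (ContinuousLinearMap.id ℝ E) y :=
    (hasFDerivAt_id y).add_const c
  have h2 := ((hf (y + c)).hasFDerivAt.comp y h1)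
  simpa [Function.comp_def] using h2.fderiv

private lemma itdf_translate {E F : Type*} [NormedAddCommGroup E] [NormedSpace ℝ E]
    [NormedAddCommGroup F] [NormedSpace ℝ F] :
    ∀ (n : ℕ) (f : E → F), ContDiff ℝ (⊤:ℕ∞) f → ∀ (c y : E),
      iteratedFDeriv ℝ n (fun z => f (z + c)) y = iteratedFDeriv ℝ n f (y + c) := by
  intro n
  induction n with
  | zero =>
    intro f hf c y
    ext m
    simp [iteratedFDeriv_zero_apply]
  | succ n ih =>
    intro f hf c y
    ext m
    rw [iteratedFDeriv_succ_apply_left, iteratedFDeriv_succ_apply_left]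
    have hdiff : Differentiable ℝ (iteratedFDeriv ℝ n f) :=
      hf.differentiable_iteratedFDeriv (by exact_mod_cast lt_top_iff_ne_top.2 (by simp))
    have heq : iteratedFDeriv ℝ n (fun z => f (z + c)) = fun w => iteratedFDeriv ℝ n f (w + c) :=
      funext fun w => ih f hf c w
    rw [heq, fderiv_translate' hdiff c y]

/-- Decay of Schwartz seminorms of the product `y ↦ φ₀(y+c) ψ(y)`. -/
private lemma seminorm_decay {d : ℕ} (φ₀ ψ : SchwartzMap (Euc d) ℂ) (k n : ℕ) :
    ∃ D : ℝ, 0 ≤ D ∧ ∀ (c : Euc d) (Φ : SchwartzMap (Euc d) ℂ),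
      (⇑Φ = fun z => φ₀ (z + c) * ψ z) →
      SchwartzMap.seminorm ℂ k n Φ ≤ D * ((1 + ‖c‖) ^ (2 * d))⁻¹ := by
  classical
  set Pφ : ℝ := 2 ^ (2 * d) * ((Finset.Iic (2 * d, n)).sup
    (fun m => SchwartzMap.seminorm ℝ m.1 m.2)) φ₀ with hPφ
  set Pψ : ℝ := 2 ^ (k + 2 * d) * ((Finset.Iic (k + 2 * d, n)).sup
    (fun m => SchwartzMap.seminorm ℝ m.1 m.2)) ψ with hPψ
  have hPφ0 : 0 ≤ Pφ := by positivity
  have hPψ0 : 0 ≤ Pψ := by positivity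
  refine ⟨∑ i ∈ Finset.range (n + 1), (n.choose i : ℝ) * Pφ * Pψ, by positivity, ?_⟩
  intro c Φ hΦ
  have hc1 : (0:ℝ) < (1 + ‖c‖) ^ (2 * d) := by positivity
  rw [← div_eq_mul_inv]
  apply SchwartzMap.seminorm_le_bound ℂ k n Φ (by positivity)
  intro y
  rw [le_div_iff₀ hc1]
  have hφsm : ContDiff ℝ ((⊤:ℕ∞):WithTop ℕ∞) (fun z : Euc d => φ₀ (z + c)) :=
    (φ₀.smooth ⊤).comp (contDiff_id.add contDiff_const)
  have hψsm : ContDiff ℝ ((⊤:ℕ∞):WithTop ℕ∞) (⇑ψ) := ψ.smooth ⊤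
  have hmul : ‖iteratedFDeriv ℝ n (⇑Φ) y‖ ≤
      ∑ i ∈ Finset.range (n + 1), (n.choose i : ℝ) *
        ‖iteratedFDeriv ℝ i (⇑φ₀) (y + c)‖ * ‖iteratedFDeriv ℝ (n - i) (⇑ψ) y‖ := by
    rw [hΦ]
    refine le_trans (norm_iteratedFDeriv_mul_le hφsm hψsm y (by exact_mod_cast le_top)) ?_
    refine le_of_eq (Finset.sum_congr rfl fun i _ => ?_)
    rw [itdf_translate i (⇑φ₀) (φ₀.smooth ⊤) c y]
  have hAB : (1 + ‖c‖) ≤ (1 + ‖y + c‖) * (1 + ‖y‖) := by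
    have h1 : ‖c‖ ≤ ‖y + c‖ + ‖y‖ := by
      have := norm_sub_le (y + c) y
      simpa using this
    nlinarith [norm_nonneg (y + c), norm_nonneg y, norm_nonneg c]
  calc ‖y‖ ^ k * ‖iteratedFDeriv ℝ n (⇑Φ) y‖ * (1 + ‖c‖) ^ (2 * d)
      ≤ (1 + ‖y‖) ^ k * (∑ i ∈ Finset.range (n + 1), (n.choose i : ℝ) *
          ‖iteratedFDeriv ℝ i (⇑φ₀) (y + c)‖ * ‖iteratedFDeriv ℝ (n - i) (⇑ψ) y‖) *
          ((1 + ‖y + c‖) * (1 + ‖y‖)) ^ (2 * d) := by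
        have h1 : ‖y‖ ^ k ≤ (1 + ‖y‖) ^ k :=
          pow_le_pow_left₀ (norm_nonneg y) (by linarith [norm_nonneg y]) k
        have h3 : (1 + ‖c‖) ^ (2 * d) ≤ ((1 + ‖y + c‖) * (1 + ‖y‖)) ^ (2 * d) :=
          pow_le_pow_left₀ (by positivity) hAB _
        gcongr
      _ = ∑ i ∈ Finset.range (n + 1), (n.choose i : ℝ) *
            ((1 + ‖y + c‖) ^ (2 * d) * ‖iteratedFDeriv ℝ i (⇑φ₀) (y + c)‖) *
            ((1 + ‖y‖) ^ (k + 2 * d) * ‖iteratedFDeriv ℝ (n - i) (⇑ψ) y‖) := by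
        rw [Finset.mul_sum, Finset.sum_mul]
        refine Finset.sum_congr rfl fun i _ => ?_
        rw [mul_pow, pow_add]
        ring
      _ ≤ ∑ i ∈ Finset.range (n + 1), (n.choose i : ℝ) * Pφ * Pψ := by
        refine Finset.sum_le_sum fun i hi => ?_
        have h1 : (1 + ‖y + c‖) ^ (2 * d) * ‖iteratedFDeriv ℝ i (⇑φ₀) (y + c)‖ ≤ Pφ := by
          rw [hPφ]
          exact SchwartzMap.one_add_le_sup_seminorm_apply (m := (2 * d, n)) le_rfl
            (Nat.lt_succ_iff.mp (Finset.mem_range.mp hi)) φ₀ (y + c)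
        have h2 : (1 + ‖y‖) ^ (k + 2 * d) * ‖iteratedFDeriv ℝ (n - i) (⇑ψ) y‖ ≤ Pψ := by
          rw [hPψ]
          exact SchwartzMap.one_add_le_sup_seminorm_apply (m := (k + 2 * d, n)) le_rfl
            (Nat.sub_le n i) ψ y
        gcongr

private noncomputable def uwt (z : ℤ) : ℝ := (((1:ℝ) + |(z:ℝ)|) ^ 2)⁻¹

private lemma uwt_nonneg (z : ℤ) : 0 ≤ uwt z := by unfold uwt; positivity

private lemma uwt_summable : Summable uwt := by
  have hnat : Summable (fun n : ℕ => (((1:ℝ) + (n:ℝ)) ^ 2)⁻¹) := by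
    have h2 : Summable (fun n : ℕ => 1 / ((n:ℝ)) ^ 2) :=
      Real.summable_one_div_nat_pow.2 one_lt_two
    have := (summable_nat_add_iff 1).2 h2
    refine this.congr fun n => ?_
    push_cast
    rw [one_div]
    ring_nf
  apply Summable.of_nat_of_neg
  · refine hnat.congr fun n => ?_
    simp [uwt]
  · refine hnat.congr fun n => ?_
    simp [uwt]

private lemma pi_prod_summable {d : ℕ} {u : ℤ → ℝ} (hu : Summable u) (hu0 : ∀ z, 0 ≤ u z) :
    Summable (fun j : Fin d → ℤ => ∏ i, u (j i)) ∧
    ∑' j : Fin d → ℤ, ∏ i, u (j i) = (∑' z, u z) ^ d := by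
  induction d with
  | zero =>
    constructor
    · exact Summable.of_finite
    · simp
  | succ d ih =>
    obtain ⟨hs, ht⟩ := ih
    have hu0' : 0 ≤ u := Pi.le_def.2 (by simpa using hu0)
    have hprod0 : (0:(Fin d → ℤ) → ℝ) ≤ fun j => ∏ i, u (j i) :=
      Pi.le_def.2 (by intro j; simpa using Finset.prod_nonneg fun i _ => hu0 (j i))
    have hG : Summable (fun p : ℤ × (Fin d → ℤ) => u p.1 * ∏ i, u (p.2 i)) :=
      Summable.mul_of_nonneg (f := u) (g := fun j : Fin d → ℤ => ∏ i, u (j i)) hu hs hu0' hprod0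
    set e : ℤ × (Fin d → ℤ) ≃ (Fin (d+1) → ℤ) := Fin.consEquiv (fun _ => ℤ) with he
    have hcomp : ∀ p : ℤ × (Fin d → ℤ),
        (∏ i, u ((e p) i)) = u p.1 * ∏ i, u (p.2 i) := by
      rintro ⟨z, j⟩
      rw [Fin.prod_univ_succ]
      simp [he, Fin.consEquiv]
    have hF : Summable (fun j : Fin (d+1) → ℤ => ∏ i, u (j i)) := by
      rw [← e.summable_iff]
      exact hG.congr fun p => (hcomp p).symm
    refine ⟨hF, ?_⟩
    rw [← e.tsum_eq (fun j => ∏ i, u (j i))]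
    calc ∑' p : ℤ × (Fin d → ℤ), ∏ i, u ((e p) i)
        = ∑' p : ℤ × (Fin d → ℤ), u p.1 * ∏ i, u (p.2 i) := tsum_congr hcomp
      _ = ∑' z : ℤ, ∑' j : Fin d → ℤ, u z * ∏ i, u (j i) :=
          Summable.tsum_prod' (f := fun p : ℤ × (Fin d → ℤ) => u p.1 * ∏ i, u (p.2 i)) hG
            (fun z => hs.mul_left (u z))
      _ = ∑' z : ℤ, u z * ∑' j : Fin d → ℤ, ∏ i, u (j i) := by
          refine tsum_congr fun z => tsum_mul_left
      _ = (∑' z, u z) ^ (d + 1) := by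
          rw [tsum_mul_right, ht]; ring

private lemma shifted_sum {d : ℕ} {u : ℤ → ℝ} (hu : Summable u) (hu0 : ∀ z, 0 ≤ u z)
    (m : Fin d → ℤ) :
    Summable (fun j : Fin d → ℤ => ∏ i, u (j i - m i)) ∧
    ∑' j : Fin d → ℤ, ∏ i, u (j i - m i) = (∑' z, u z) ^ d := by
  obtain ⟨hs, ht⟩ := pi_prod_summable hu hu0 (d := d)
  set e : (Fin d → ℤ) ≃ (Fin d → ℤ) := Equiv.subRight m with he
  have hcomp : ∀ j : Fin d → ℤ, (∏ i, u ((e j) i)) = ∏ i, u (j i - m i) := by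
    intro j; simp [he, Equiv.subRight, Pi.sub_apply]
  constructor
  · rw [show (fun j : Fin d → ℤ => ∏ i, u (j i - m i))
        = (fun j : Fin d → ℤ => ∏ i, u (j i)) ∘ e from funext fun j => (hcomp j).symm]
    exact e.summable_iff.2 hs
  · rw [← ht, ← e.tsum_eq (fun j => ∏ i, u (j i))]
    exact (tsum_congr hcomp).symm

set_option maxHeartbeats 1000000 in
theorem tempered_distribution_periodization_sum_bounded
    {d : ℕ} (hd : 1 ≤ d)
    (e : Fin d → Euc d) (he : LinearIndependent ℝ e)
    (f : SchwartzMap (Euc d) ℂ →L[ℂ] ℂ)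
    (φ₀ ψ : SchwartzMap (Euc d) ℂ)
    (W : Euc d → (Fin d → ℤ) → SchwartzMap (Euc d) ℂ)
    (hW : ∀ (x : Euc d) (j : Fin d → ℤ) (y : Euc d),
      W x j y = φ₀ (y - x + latPt e j) * ψ y) :
    ∃ B : ℝ, ∀ x : Euc d,
      Summable (fun j : Fin d → ℤ => ‖f (W x j)‖) ∧
      ∑' j : Fin d → ℤ, ‖f (W x j)‖ ≤ B := by
  classical
  haveI : Nonempty (Fin d) := ⟨⟨0, hd⟩⟩
  -- continuity bound for the tempered distribution
  obtain ⟨s, C, hC0, hC⟩ := Seminorm.bound_of_continuous (schwartz_withSeminorms ℂ (Euc d) ℂ)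
    ((normSeminorm ℂ ℂ).comp f.toLinearMap) (by
      show Continuous fun φ : SchwartzMap (Euc d) ℂ => ‖f φ‖
      exact f.continuous.norm)
  have hfb : ∀ φ : SchwartzMap (Euc d) ℂ,
      ‖f φ‖ ≤ (C : ℝ) * (s.sup (schwartzSeminormFamily ℂ (Euc d) ℂ)) φ := by
    intro φ
    have := hC φ
    simpa [Seminorm.comp_apply, NNReal.smul_def, smul_eq_mul] using this
  -- seminorm decay constants
  choose D hD0 hDle using fun kn : ℕ × ℕ => seminorm_decay φ₀ ψ kn.1 kn.2
  set D0 : ℝ := ∑ kn ∈ s, D kn with hD0def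
  have hD0nonneg : 0 ≤ D0 := Finset.sum_nonneg fun kn _ => hD0 kn
  -- coordinates w.r.t. the basis e
  set b : Module.Basis (Fin d) ℝ (Euc d) :=
    basisOfLinearIndependentOfCardEqFinrank he (by simp) with hb
  set L : Euc d →L[ℝ] (Fin d → ℝ) :=
    LinearMap.toContinuousLinearMap (b.equivFun : Euc d →ₗ[ℝ] (Fin d → ℝ)) with hLdef
  have hLapp : ∀ v : Euc d, L v = b.equivFun v := fun v => rfl
  have hlat : ∀ j : Fin d → ℤ, (b.equivFun (latPt e j)) = fun i => (j i : ℝ) := by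
    intro j
    have h1 : latPt e j = b.equivFun.symm (fun i => (j i : ℝ)) := by
      rw [Module.Basis.equivFun_symm_apply]
      unfold latPt
      refine Finset.sum_congr rfl fun i _ => ?_
      rw [hb, coe_basisOfLinearIndependentOfCardEqFinrank]
    rw [h1, LinearEquiv.apply_symm_apply]
  set c₁ : ℝ := max 1 ‖L‖ with hc₁
  have hc₁1 : (1:ℝ) ≤ c₁ := le_max_left _ _
  have hcoord : ∀ (x : Euc d) (j : Fin d → ℤ) (i : Fin d),
      1 + |(j i : ℝ) - L x i| ≤ c₁ * (1 + ‖latPt e j - x‖) := by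
    intro x j i
    have h1 : (L (latPt e j - x)) i = (j i : ℝ) - L x i := by
      rw [map_sub]
      have := hlat j
      simp [hLapp, this]
    have h2 : |(j i : ℝ) - L x i| ≤ ‖L‖ * ‖latPt e j - x‖ := by
      rw [← h1]
      calc |(L (latPt e j - x)) i| ≤ ‖L (latPt e j - x)‖ := by
            simpa using norm_le_pi_norm (L (latPt e j - x)) i
        _ ≤ ‖L‖ * ‖latPt e j - x‖ := L.le_opNorm _
    have hLc : ‖L‖ ≤ c₁ := le_max_right _ _
    have h3 : ‖L‖ * ‖latPt e j - x‖ ≤ c₁ * ‖latPt e j - x‖ :=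
      mul_le_mul_of_nonneg_right hLc (norm_nonneg _)
    nlinarith [norm_nonneg (latPt e j - x)]
  set S : ℝ := ∑' z : ℤ, uwt z with hS
  set K : ℝ := (C:ℝ) * D0 * ((2*c₁)^(2*d)) with hK
  have hKpos : 0 ≤ K := by positivity
  refine ⟨K * S ^ d, ?_⟩
  intro x
  set m : Fin d → ℤ := fun i => round (L x i) with hm
  obtain ⟨hsum, htsum⟩ := shifted_sum uwt_summable uwt_nonneg m
  -- pointwise bound
  have hpt : ∀ j : Fin d → ℤ, ‖f (W x j)‖ ≤ K * ∏ i, uwt (j i - m i) := by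
    intro j
    set c : Euc d := latPt e j - x with hc
    set r : ℝ := ‖c‖ with hr
    have hr0 : (0:ℝ) ≤ r := norm_nonneg _
    have hW' : ⇑(W x j) = fun z => φ₀ (z + c) * ψ z := by
      funext z
      rw [hW x j z, show z - x + latPt e j = z + c from by rw [hc]; abel]
    -- seminorm bound
    have hsem : ∀ kn ∈ s, (schwartzSeminormFamily ℂ (Euc d) ℂ kn) (W x j) ≤
        D0 * ((1 + r) ^ (2 * d))⁻¹ := by
      intro kn hkn
      have h1 := hDle kn c (W x j) hW'
      have h2 : D kn ≤ D0 := Finset.single_le_sum (fun kn' _ => hD0 kn') hkn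
      have h3 : (0:ℝ) ≤ ((1 + r) ^ (2 * d))⁻¹ := by positivity
      calc (schwartzSeminormFamily ℂ (Euc d) ℂ kn) (W x j)
          = SchwartzMap.seminorm ℂ kn.1 kn.2 (W x j) := rfl
        _ ≤ D kn * ((1 + r) ^ (2 * d))⁻¹ := h1
        _ ≤ D0 * ((1 + r) ^ (2 * d))⁻¹ := mul_le_mul_of_nonneg_right h2 h3
    have hsup : (s.sup (schwartzSeminormFamily ℂ (Euc d) ℂ)) (W x j) ≤
        D0 * ((1 + r) ^ (2 * d))⁻¹ :=
      Seminorm.finset_sup_apply_le (by positivity) hsem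
    -- geometric comparison
    have hgeo : ((1 + r) ^ (2 * d))⁻¹ ≤ (2*c₁)^(2*d) * ∏ i, uwt (j i - m i) := by
      have hcd : ∀ i : Fin d, 1 + |((j i - m i : ℤ) : ℝ)| ≤ 2 * c₁ * (1 + r) := by
        intro i
        have h1 := hcoord x j i
        have h2 : |L x i - (m i : ℝ)| ≤ 1/2 := by
          rw [hm]; exact abs_sub_round (L x i)
        have h3 : |((j i - m i : ℤ) : ℝ)| ≤ |(j i : ℝ) - L x i| + |L x i - (m i : ℝ)| := by
          push_cast
          calc |(j i : ℝ) - (m i : ℝ)|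
              = |((j i : ℝ) - L x i) + (L x i - (m i : ℝ))| := by ring_nf
            _ ≤ _ := abs_add_le _ _
        have h4 : (1:ℝ) ≤ c₁ * (1 + r) := by nlinarith
        nlinarith
      have hProd : (∏ i : Fin d, (1 + |((j i - m i : ℤ) : ℝ)|) ^ 2)
          ≤ (2 * c₁ * (1 + r)) ^ (2 * d) := by
        have : (∏ i : Fin d, (1 + |((j i - m i : ℤ) : ℝ)|) ^ 2)
            ≤ ∏ _i : Fin d, (2 * c₁ * (1 + r)) ^ 2 := by
          refine Finset.prod_le_prod (fun i _ => by positivity) (fun i _ => ?_)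
          exact pow_le_pow_left₀ (by positivity) (hcd i) 2
        calc (∏ i : Fin d, (1 + |((j i - m i : ℤ) : ℝ)|) ^ 2)
            ≤ ∏ _i : Fin d, (2 * c₁ * (1 + r)) ^ 2 := this
          _ = ((2 * c₁ * (1 + r)) ^ 2) ^ d := by
              rw [Finset.prod_const, Finset.card_univ, Fintype.card_fin]
          _ = (2 * c₁ * (1 + r)) ^ (2 * d) := by rw [← pow_mul, mul_comm 2 d, pow_mul]
              
      have hval : (∏ i, uwt (j i - m i))
          = (∏ i : Fin d, (1 + |((j i - m i : ℤ) : ℝ)|) ^ 2)⁻¹ := by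
        rw [← Finset.prod_inv_distrib]
        exact Finset.prod_congr rfl fun i _ => rfl
      rw [hval]
      have hA : (0:ℝ) < (1 + r) ^ (2 * d) := by positivity
      have hP : (0:ℝ) < ∏ i : Fin d, (1 + |((j i - m i : ℤ) : ℝ)|) ^ 2 :=
        Finset.prod_pos fun i _ => by positivity
      rw [inv_eq_one_div, ← div_eq_mul_inv, div_le_div_iff₀ hA hP]
      calc 1 * (∏ i : Fin d, (1 + |((j i - m i : ℤ) : ℝ)|) ^ 2)
          = ∏ i : Fin d, (1 + |((j i - m i : ℤ) : ℝ)|) ^ 2 := one_mul _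
        _ ≤ (2 * c₁ * (1 + r)) ^ (2 * d) := hProd
        _ = (2 * c₁) ^ (2 * d) * (1 + r) ^ (2 * d) := mul_pow _ _ _
    calc ‖f (W x j)‖ ≤ (C : ℝ) * (s.sup (schwartzSeminormFamily ℂ (Euc d) ℂ)) (W x j) :=
          hfb (W x j)
      _ ≤ (C : ℝ) * (D0 * ((1 + r) ^ (2 * d))⁻¹) := by
          exact mul_le_mul_of_nonneg_left hsup (by positivity)
      _ ≤ (C : ℝ) * (D0 * ((2*c₁)^(2*d) * ∏ i, uwt (j i - m i))) := by
          refine mul_le_mul_of_nonneg_left ?_ (by positivity)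
          exact mul_le_mul_of_nonneg_left hgeo hD0nonneg
      _ = K * ∏ i, uwt (j i - m i) := by rw [hK]; ring
  have hKsum : Summable (fun j : Fin d → ℤ => K * ∏ i, uwt (j i - m i)) := hsum.mul_left K
  have hsummable : Summable (fun j : Fin d → ℤ => ‖f (W x j)‖) :=
    Summable.of_nonneg_of_le (fun j => norm_nonneg _) hpt hKsum
  refine ⟨hsummable, ?_⟩
  calc ∑' j : Fin d → ℤ, ‖f (W x j)‖
      ≤ ∑' j : Fin d → ℤ, K * ∏ i, uwt (j i - m i) := Summable.tsum_le_tsum hpt hsummable hKsum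
    _ = K * ∑' j : Fin d → ℤ, ∏ i, uwt (j i - m i) := tsum_mul_left
    _ = K * S ^ d := by rw [htsum]


end
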